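/- Fix α ∈ [0, 1/2) and let p : ℕ → ℕ be polynomially bounded, i.e., there exists d ∈ ℕ with p(n) ≤ n^d + d for all n. For each n, let c be a uniformly random Boolean function from {0,1}^n to {0,1}, let x_1, …, x_{p(n)} be i.i.d. uniform samples from {0,1}^n independent of c, and let T^c_{p(n)} = ((x_1, c(x_1)), …, (x_{p(n)}, c(x_{p(n)}))). Then ε(n, α) := sup_W P( W(T^c_{p(n)}) ∈ B(c, α) ), where the supremum is over all randomized estimators W mapping elements of ({0,1}^n × {0,1})^{p(n)} to probability distributions over Boolean functions on {0,1}^n, tends to 0 as n → ∞. -/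

import Mathlib

open scoped Classical

/-- The set `B(c, α)` of Boolean functions on `{0,1}^n` differing from `c`
on at most `α·2^n` inputs. -/
noncomputable def ball (n : ℕ) (c : (Fin n → Bool) → Bool) (α : ℝ) :
    Finset ((Fin n → Bool) → Bool) :=
  Finset.univ.filter
    (fun c' => ((Finset.univ.filter (fun x : Fin n → Bool => c' x ≠ c x)).card : ℝ) ≤ α * 2 ^ n)

/-- The training set `T^c_p = ((x_1, c(x_1)), …, (x_p, c(x_p)))`. -/
def trainSet (n p : ℕ) (c : (Fin n → Bool) → Bool) (x : Fin p → (Fin n → Bool)) :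
    Fin p → ((Fin n → Bool) × Bool) :=
  fun i => (x i, c (x i))

/-- The probability, over a uniformly random Boolean function `c` on `{0,1}^n`, over `p`
i.i.d. uniform samples `x_1, …, x_p` from `{0,1}^n`, and over the internal randomness of
the randomized estimator `W`, that `W(T^c_p) ∈ B(c, α)`. -/
noncomputable def probEstimator (n p : ℕ) (α : ℝ)
    (W : (Fin p → ((Fin n → Bool) × Bool)) → PMF ((Fin n → Bool) → Bool)) : ℝ :=
  (∑ c : (Fin n → Bool) → Bool, ∑ x : Fin p → (Fin n → Bool),
      ∑ c' ∈ ball n c α, ((W (trainSet n p c x)) c').toReal)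
    / ((Fintype.card ((Fin n → Bool) → Bool) : ℝ) * (Fintype.card (Fin n → Bool) : ℝ) ^ p)

open Finset

private lemma sum_pow_dist (n : ℕ) (c' : (Fin n → Bool) → Bool) (l : ℝ) :
    (∑ c : (Fin n → Bool) → Bool,
      l ^ (Finset.univ.filter fun x => c' x ≠ c x).card) = (1 + l) ^ (2 ^ n) := by
  have h1 : ∀ c : (Fin n → Bool) → Bool,
      l ^ (Finset.univ.filter fun x => c' x ≠ c x).card
        = ∏ x : Fin n → Bool, (if c' x ≠ c x then l else 1) := by
    intro c
    rw [← Finset.prod_filter]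
    rw [Finset.prod_const]
  simp only [h1]
  rw [← Fintype.piFinset_univ, ← Finset.prod_univ_sum (fun _ : Fin n → Bool => (Finset.univ : Finset Bool)) (fun x b => if c' x ≠ b then l else 1)]
  have h2 : ∀ x : Fin n → Bool,
      (∑ b : Bool, (if c' x ≠ b then l else 1)) = 1 + l := by
    intro x
    rw [Fintype.sum_bool]
    cases hb : c' x <;> simp [hb] <;> ring
  rw [Finset.prod_congr rfl (fun x _ => h2 x)]
  rw [Finset.prod_const]
  congr 1
  simp [Fintype.card_fun]

private lemma count_ball_le (n : ℕ) (α l : ℝ) (hl0 : 0 < l) (hl1 : l ≤ 1)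
    (c' : (Fin n → Bool) → Bool) :
    ((Finset.univ.filter fun c : (Fin n → Bool) → Bool =>
        ((Finset.univ.filter fun x => c' x ≠ c x).card : ℝ) ≤ α * 2 ^ n).card : ℝ)
      ≤ (1 + l) ^ (2 ^ n) * l ^ (-(α * 2 ^ n)) := by
  have hs : (0:ℝ) < l ^ (α * 2 ^ n) := Real.rpow_pos_of_pos hl0 _
  rw [Real.rpow_neg hl0.le, ← div_eq_mul_inv, le_div_iff₀ hs]
  set s := Finset.univ.filter fun c : (Fin n → Bool) → Bool =>
        ((Finset.univ.filter fun x => c' x ≠ c x).card : ℝ) ≤ α * 2 ^ n with hsdef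
  calc (s.card : ℝ) * l ^ (α * 2 ^ n)
      = ∑ _c ∈ s, l ^ (α * 2 ^ n) := by rw [Finset.sum_const, nsmul_eq_mul]
    _ ≤ ∑ c ∈ s, l ^ (Finset.univ.filter fun x => c' x ≠ c x).card := by
        apply Finset.sum_le_sum
        intro c hc
        rw [← Real.rpow_natCast l]
        exact Real.rpow_le_rpow_of_exponent_ge hl0 hl1 (Finset.mem_filter.1 hc).2
    _ ≤ ∑ c : (Fin n → Bool) → Bool,
          l ^ (Finset.univ.filter fun x => c' x ≠ c x).card := by
        apply Finset.sum_le_sum_of_subset_of_nonneg (Finset.filter_subset _ _)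
        intro c _ _
        positivity
    _ = (1 + l) ^ (2 ^ n) := sum_pow_dist n c' l

private lemma pmf_sum_one {β : Type*} [Fintype β] (P : PMF β) :
    ∑ b : β, (P b).toReal = 1 := by
  rw [← ENNReal.toReal_sum (fun b _ => (PMF.apply_lt_top P b).ne)]
  rw [← tsum_fintype (L := SummationFilter.unconditional _), PMF.tsum_coe, ENNReal.toReal_one]

private lemma probEstimator_le (n q : ℕ) (α l : ℝ)
    (hl0 : 0 < l) (hl1 : l ≤ 1)
    (W : (Fin q → ((Fin n → Bool) × Bool)) → PMF ((Fin n → Bool) → Bool)) :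
    probEstimator n q α W ≤
      2 ^ q * ((1 + l) ^ (2 ^ n) * l ^ (-(α * 2 ^ n))) / 2 ^ (2 ^ n) := by
  set K : ℝ := (1 + l) ^ (2 ^ n) * l ^ (-(α * 2 ^ n)) with hK
  have hK0 : 0 ≤ K := by
    apply mul_nonneg (by positivity)
    exact (Real.rpow_pos_of_pos hl0 _).le
  -- per-x bound
  have hx : ∀ x : Fin q → (Fin n → Bool),
      (∑ c : (Fin n → Bool) → Bool,
        ∑ c' ∈ ball n c α, ((W (trainSet n q c x)) c').toReal) ≤ 2 ^ q * K := by
    intro x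
    rw [← Finset.sum_fiberwise Finset.univ (fun c : (Fin n → Bool) → Bool => fun i => c (x i))
      (fun c => ∑ c' ∈ ball n c α, ((W (trainSet n q c x)) c').toReal)]
    have hr : ∀ r : Fin q → Bool,
        (∑ c ∈ Finset.univ.filter (fun c : (Fin n → Bool) → Bool => (fun i => c (x i)) = r),
          ∑ c' ∈ ball n c α, ((W (trainSet n q c x)) c').toReal) ≤ K := by
      intro r
      set D : Fin q → ((Fin n → Bool) × Bool) := fun i => (x i, r i) with hD
      set fib := Finset.univ.filter
        (fun c : (Fin n → Bool) → Bool => (fun i => c (x i)) = r) with hfib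
      have hTS : ∀ c ∈ fib, trainSet n q c x = D := by
        intro c hc
        have h := (Finset.mem_filter.1 hc).2
        funext i
        simp only [trainSet, hD]
        rw [congrFun h i]
      calc (∑ c ∈ fib, ∑ c' ∈ ball n c α, ((W (trainSet n q c x)) c').toReal)
          = ∑ c ∈ fib, ∑ c' : (Fin n → Bool) → Bool,
              (if ((Finset.univ.filter fun x => c' x ≠ c x).card : ℝ) ≤ α * 2 ^ n
                then ((W D) c').toReal else 0) := by
            apply Finset.sum_congr rfl
            intro c hc
            rw [hTS c hc, ball, Finset.sum_filter]
        _ = ∑ c' : (Fin n → Bool) → Bool, ∑ c ∈ fib,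
              (if ((Finset.univ.filter fun x => c' x ≠ c x).card : ℝ) ≤ α * 2 ^ n
                then ((W D) c').toReal else 0) := Finset.sum_comm
        _ ≤ ∑ c' : (Fin n → Bool) → Bool, ((W D) c').toReal * K := by
            apply Finset.sum_le_sum
            intro c' _
            rw [← Finset.sum_filter, Finset.sum_const, nsmul_eq_mul, mul_comm]
            apply mul_le_mul_of_nonneg_left _ ENNReal.toReal_nonneg
            calc ((Finset.filter (fun c => ((Finset.univ.filter fun x => c' x ≠ c x).card : ℝ)
                    ≤ α * 2 ^ n) fib).card : ℝ)
                ≤ ((Finset.univ.filter fun c : (Fin n → Bool) → Bool =>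
                    ((Finset.univ.filter fun x => c' x ≠ c x).card : ℝ) ≤ α * 2 ^ n).card : ℝ) := by
                  apply Nat.cast_le.2
                  apply Finset.card_le_card
                  apply Finset.filter_subset_filter
                  exact Finset.filter_subset _ _
              _ ≤ K := count_ball_le n α l hl0 hl1 c'
        _ = K := by rw [← Finset.sum_mul, pmf_sum_one (W D), one_mul]
    calc (∑ r : Fin q → Bool, ∑ c ∈ Finset.univ.filter
            (fun c : (Fin n → Bool) → Bool => (fun i => c (x i)) = r),
          ∑ c' ∈ ball n c α, ((W (trainSet n q c x)) c').toReal)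
        ≤ Finset.univ.card • K := Finset.sum_le_card_nsmul _ _ _ (fun r _ => hr r)
      _ = 2 ^ q * K := by
          rw [nsmul_eq_mul, Finset.card_univ, Fintype.card_fun]
          norm_num
  -- assemble
  rw [probEstimator]
  have hden : (0:ℝ) < (Fintype.card ((Fin n → Bool) → Bool) : ℝ)
      * (Fintype.card (Fin n → Bool) : ℝ) ^ q := by positivity
  rw [div_le_iff₀ hden]
  calc (∑ c : (Fin n → Bool) → Bool, ∑ x : Fin q → (Fin n → Bool),
          ∑ c' ∈ ball n c α, ((W (trainSet n q c x)) c').toReal)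
      = ∑ x : Fin q → (Fin n → Bool), ∑ c : (Fin n → Bool) → Bool,
          ∑ c' ∈ ball n c α, ((W (trainSet n q c x)) c').toReal := Finset.sum_comm
    _ ≤ Finset.univ.card • (2 ^ q * K) :=
        Finset.sum_le_card_nsmul _ _ _ (fun x _ => hx x)
    _ = ((2:ℝ) ^ n) ^ q * (2 ^ q * K) := by
        rw [nsmul_eq_mul, Finset.card_univ, Fintype.card_fun, Fintype.card_fun]
        push_cast
        norm_num
    _ = 2 ^ q * K / 2 ^ 2 ^ n * ((Fintype.card ((Fin n → Bool) → Bool) : ℝ)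
          * (Fintype.card (Fin n → Bool) : ℝ) ^ q) := by
        rw [Fintype.card_fun, Fintype.card_fun]
        push_cast
        rw [Fintype.card_fin, Fintype.card_bool]
        field_simp
        ring

private lemma probEstimator_nonneg (n q : ℕ) (α : ℝ)
    (W : (Fin q → ((Fin n → Bool) × Bool)) → PMF ((Fin n → Bool) → Bool)) :
    0 ≤ probEstimator n q α W := by
  apply div_nonneg _ (by positivity)
  apply Finset.sum_nonneg
  intro c _
  apply Finset.sum_nonneg
  intro x _
  exact Finset.sum_nonneg fun c' _ => ENNReal.toReal_nonneg

private lemma rho_lt_one (α : ℝ) (hα0 : 0 ≤ α) (hα1 : α < 1 / 2) :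
    (1 + (1 - (1 / 2 - α) / 2)) / 2 * (1 - (1 / 2 - α) / 2) ^ (-α) < 1 := by
  set ε : ℝ := (1 / 2 - α) / 2 with hε
  have hε0 : 0 < ε := by rw [hε]; linarith
  have hε4 : ε ≤ 1 / 4 := by rw [hε]; linarith
  set l : ℝ := 1 - ε with hl
  have hl0 : 0 < l := by rw [hl]; linarith
  have hl1 : l < 1 := by rw [hl]; linarith
  have hpow : (0:ℝ) < l ^ (α : ℝ) := Real.rpow_pos_of_pos hl0 _
  rw [Real.rpow_neg hl0.le, ← div_eq_mul_inv, div_lt_one hpow]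
  -- (1+l)/2 = 1 - ε/2 < l ^ α
  have hlog : Real.log l ≥ -(ε / l) := by
    have h1 : Real.log l⁻¹ ≤ l⁻¹ - 1 := Real.log_le_sub_one_of_pos (by positivity)
    have h2 : l⁻¹ - 1 = ε / l := by field_simp; linarith
    rw [Real.log_inv] at h1
    linarith [h2 ▸ h1]
  have key : 1 - ε / 2 < l ^ (α : ℝ) := by
    have h3 : l ^ (α : ℝ) = Real.exp (α * Real.log l) := by
      rw [Real.rpow_def_of_pos hl0 α, mul_comm]
    have h4 : α * Real.log l + 1 ≤ Real.exp (α * Real.log l) :=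
      Real.add_one_le_exp _
    have h5 : α * Real.log l ≥ α * (-(ε / l)) :=
      mul_le_mul_of_nonneg_left hlog hα0
    have h6 : α * (-(ε / l)) > -(ε / 2) := by
      have h2a : 2 * α < l := by rw [hl, hε]; linarith
      have hd : α * (ε / l) < ε / 2 := by
        rw [mul_div_assoc', div_lt_div_iff₀ hl0 (by norm_num : (0:ℝ) < 2)]
        nlinarith
      linarith
    linarith [h3 ▸ h4]
  linarith

private lemma tendsto_bound (ρ : ℝ) (hρ0 : 0 < ρ) (hρ1 : ρ < 1) (d : ℕ) :
    Filter.Tendsto (fun n : ℕ => (2:ℝ) ^ (n ^ d + d) * ρ ^ (2 ^ n))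
      Filter.atTop (nhds 0) := by
  have hlogρ : Real.log ρ < 0 := Real.log_neg hρ0 hρ1
  have h1 : Filter.Tendsto
      (fun n : ℕ => ((n:ℝ) ^ d / 2 ^ n) * Real.log 2 + Real.log ρ)
      Filter.atTop (nhds (Real.log ρ)) := by
    have := ((tendsto_pow_const_div_const_pow_of_one_lt d
      (by norm_num : (1:ℝ) < 2)).mul_const (Real.log 2)).add_const (Real.log ρ)
    simpa using this
  have h2 : Filter.Tendsto (fun n : ℕ => (2:ℝ) ^ n) Filter.atTop Filter.atTop :=
    tendsto_pow_atTop_atTop_of_one_lt (by norm_num : (1:ℝ) < 2)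
  have h3 : Filter.Tendsto
      (fun n : ℕ => (2:ℝ) ^ n * (((n:ℝ) ^ d / 2 ^ n) * Real.log 2 + Real.log ρ))
      Filter.atTop Filter.atBot := h2.atTop_mul_neg hlogρ h1
  have h4 : (fun n : ℕ => (2:ℝ) ^ n * (((n:ℝ) ^ d / 2 ^ n) * Real.log 2 + Real.log ρ))
      = fun n : ℕ => (n:ℝ) ^ d * Real.log 2 + (2:ℝ) ^ n * Real.log ρ := by
    funext n
    have : (2:ℝ) ^ n ≠ 0 := by positivity
    field_simp
  rw [h4] at h3
  have h5 : Filter.Tendsto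
      (fun n : ℕ => (2:ℝ) ^ d * Real.exp ((n:ℝ) ^ d * Real.log 2 + (2:ℝ) ^ n * Real.log ρ))
      Filter.atTop (nhds ((2:ℝ) ^ d * 0)) :=
    (Real.tendsto_exp_atBot.comp h3).const_mul _
  rw [mul_zero] at h5
  convert h5 using 2 with n
  rw [Real.exp_add, pow_add]
  have e1 : Real.exp ((n:ℝ) ^ d * Real.log 2) = (2:ℝ) ^ (n ^ d) := by
    rw [← Real.exp_log (by norm_num : (0:ℝ) < 2), ← Real.exp_nat_mul, Real.log_exp]
    push_cast
    ring_nf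
  have e2 : Real.exp ((2:ℝ) ^ n * Real.log ρ) = ρ ^ (2 ^ n) := by
    rw [← Real.exp_log hρ0, ← Real.exp_nat_mul, Real.log_exp]
    push_cast
    ring_nf
  rw [e1, e2]
  ring

/-- For `α ∈ [0, 1/2)` and a polynomially bounded sample size `p(n)`, the best success
probability `ε(n, α) = sup_W P(W(T^c_{p(n)}) ∈ B(c, α))` over all randomized estimators
tends to `0` as `n → ∞`. -/
theorem stmt8 (α : ℝ) (hα0 : 0 ≤ α) (hα1 : α < 1 / 2)
    (p : ℕ → ℕ) (d : ℕ) (hp : ∀ n, p n ≤ n ^ d + d) :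
    Filter.Tendsto
      (fun n =>
        ⨆ W : (Fin (p n) → ((Fin n → Bool) × Bool)) → PMF ((Fin n → Bool) → Bool),
          probEstimator n (p n) α W)
      Filter.atTop (nhds 0) := by
  set l : ℝ := 1 - (1 / 2 - α) / 2 with hl
  have hl0 : 0 < l := by rw [hl]; linarith
  have hl1 : l ≤ 1 := by rw [hl]; linarith
  set ρ : ℝ := (1 + l) / 2 * l ^ (-α) with hρ
  have hρ0 : 0 < ρ := by
    apply mul_pos (by linarith)
    exact Real.rpow_pos_of_pos hl0 _
  have hρ1 : ρ < 1 := rho_lt_one α hα0 hα1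
  -- rewrite the bound from probEstimator_le in terms of ρ
  have hrho : ∀ n q : ℕ,
      (2:ℝ) ^ q * ((1 + l) ^ (2 ^ n) * l ^ (-(α * 2 ^ n))) / 2 ^ (2 ^ n)
        = 2 ^ q * ρ ^ (2 ^ n) := by
    intro n q
    have e1 : ρ ^ (2 ^ n) = ((1 + l) / 2) ^ (2 ^ n) * (l ^ (-α)) ^ (2 ^ n) := by
      rw [hρ, mul_pow]
    have e2 : (l ^ (-α : ℝ)) ^ (2 ^ n : ℕ) = l ^ (-(α * 2 ^ n) : ℝ) := by
      rw [← Real.rpow_natCast (l ^ (-α : ℝ)) (2 ^ n), ← Real.rpow_mul hl0.le]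
      congr 1
      push_cast
      ring
    rw [e1, e2, div_pow]
    field_simp
  -- the per-n bounds
  have hub : ∀ (n : ℕ)
      (W : (Fin (p n) → ((Fin n → Bool) × Bool)) → PMF ((Fin n → Bool) → Bool)),
      probEstimator n (p n) α W ≤ 2 ^ (n ^ d + d) * ρ ^ (2 ^ n) := by
    intro n W
    refine (probEstimator_le n (p n) α l hl0 hl1 W).trans ?_
    rw [hrho n (p n)]
    apply mul_le_mul_of_nonneg_right _ (pow_nonneg hρ0.le _)
    exact pow_le_pow_right₀ (by norm_num) (hp n)
  have hne : ∀ n : ℕ,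
      Nonempty ((Fin (p n) → ((Fin n → Bool) × Bool)) → PMF ((Fin n → Bool) → Bool)) :=
    fun n => ⟨fun _ => PMF.pure (fun _ => false)⟩
  apply squeeze_zero (f := fun n =>
      ⨆ W : (Fin (p n) → ((Fin n → Bool) × Bool)) → PMF ((Fin n → Bool) → Bool),
        probEstimator n (p n) α W)
    (g := fun n : ℕ => (2:ℝ) ^ (n ^ d + d) * ρ ^ (2 ^ n))
  · intro n
    haveI := hne n
    have hbdd : BddAbove (Set.range fun
        W : (Fin (p n) → ((Fin n → Bool) × Bool)) → PMF ((Fin n → Bool) → Bool) =>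
        probEstimator n (p n) α W) := by
      refine ⟨2 ^ (n ^ d + d) * ρ ^ (2 ^ n), ?_⟩
      rintro _ ⟨W, rfl⟩
      exact hub n W
    obtain ⟨W₀⟩ := hne n
    exact (probEstimator_nonneg n (p n) α W₀).trans (le_ciSup hbdd W₀)
  · intro n
    haveI := hne n
    exact ciSup_le (hub n)
  · exact tendsto_bound ρ hρ0 hρ1 d
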